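/- For integers m ≥ 0 and n, k, s ≥ 1, one has x₀^m ш (x₀^n x₁^k x₀^s) = Σ_{m₁+m₂+m₃=m, m_i ≥ 0} C(m₁+n-1, n-1) · C(m₃+s-1, s-1) · x₀^{m₁+n} 𝔅_{k+1}^{m₂} x₀^{m₃+s}, an identity of multisets of words, where a binomial coefficient c multiplying a multiset means the multiset repeated c times. -/

import Mathlib

/-- The shuffle product of two words, as a multiset of words. -/
def shuffle {X : Type*} : List X → List X → Multiset (List X)
  | u, [] => {u}
  | [], v => {v}
  | a :: u, b :: v =>
      (shuffle u (b :: v)).map (a :: ·) + (shuffle (a :: u) v).map (b :: ·)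
termination_by u v => u.length + v.length

/-- The two-letter alphabet `X = {x₀, x₁}`. -/
def x0 : Bool := false
def x1 : Bool := true

/-- `𝔅_r^m`: the multiset of all words `x₀^{m₁} x₁ x₀^{m₂} x₁ ⋯ x₁ x₀^{m_r}`
with `m₁ + ⋯ + m_r = m`, `m_i ≥ 0`. -/
def B (r m : ℕ) : Multiset (List Bool) :=
  (Finset.Nat.antidiagonalTuple r m).val.map fun f =>
    List.intercalate [x1] (List.ofFn fun i => List.replicate (f i) x0)

/-- `S w T`: the multiset of all concatenations `u ++ w ++ v` with `u ∈ S`, `v ∈ T`,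
counted with multiplicity. -/
def msConcat {X : Type*} (S : Multiset (List X)) (w : List X) (T : Multiset (List X)) :
    Multiset (List X) :=
  S.bind fun u => T.map fun v => u ++ w ++ v

/-! ### auxiliary lemmas -/

open Finset

lemma shuffle_nil_right {X : Type*} (u : List X) : shuffle u [] = {u} := by
  cases u <;> simp [shuffle]

lemma shuffle_nil_left {X : Type*} (v : List X) : shuffle [] v = {v} := by
  cases v <;> simp [shuffle]

lemma shuffle_cons_cons {X : Type*} (a b : X) (u v : List X) :
    shuffle (a :: u) (b :: v) =
      (shuffle u (b :: v)).map (a :: ·) + (shuffle (a :: u) v).map (b :: ·) := by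
  rw [shuffle]

/-- map of a Finset-indexed sum of multisets. -/
lemma mmap_sum {α β γ : Type*} (f : α → β) (s : Finset γ) (g : γ → Multiset α) :
    Multiset.map f (∑ x ∈ s, g x) = ∑ x ∈ s, (g x).map f :=
  map_sum (Multiset.mapAddMonoidHom f) _ _

/-- Shuffling two powers of the same letter. -/
lemma shuffle_rep_rep {X : Type*} (c : X) :
    ∀ a b, shuffle (List.replicate a c) (List.replicate b c) =
      (a + b).choose a • ({List.replicate (a + b) c} : Multiset (List X)) := by
  intro a
  induction a with
  | zero => intro b; simp [shuffle_nil_left]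
  | succ a iha =>
    intro b
    induction b with
    | zero => simp [shuffle_nil_right]
    | succ b ihb =>
      have e1 : List.replicate (a+1) c = c :: List.replicate a c := List.replicate_succ (a := c) (n := a)
      have e2 : List.replicate (b+1) c = c :: List.replicate b c := List.replicate_succ (a := c) (n := b)
      rw [e1, e2, shuffle_cons_cons, ← e1, ← e2, iha, ihb]
      simp only [Multiset.map_nsmul, Multiset.map_singleton]
      rw [show (c :: List.replicate (a + (b+1)) c) = List.replicate (a + 1 + (b+1)) c from by
            rw [show a+1+(b+1) = (a+(b+1))+1 from by omega, List.replicate_succ],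
          show (c :: List.replicate (a + 1 + b) c) = List.replicate (a + 1 + (b+1)) c from by
            rw [show a+1+(b+1) = (a+1+b)+1 from by omega, List.replicate_succ],
          ← add_nsmul]
      congr 1
      rw [show a + (b+1) = a + b + 1 from by omega, show a + 1 + b = a + b + 1 from by omega,
        show a + 1 + (b+1) = a + b + 1 + 1 from by omega]
      exact (Nat.choose_succ_succ _ _).symm

/-- Reassociation of nested antidiagonal sums. -/
lemma ad_assoc {M : Type*} [AddCommMonoid M] (n : ℕ) (f : ℕ → ℕ → ℕ → M) :
    ∑ p ∈ antidiagonal n, ∑ q ∈ antidiagonal p.1, f q.1 q.2 p.2 =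
    ∑ p ∈ antidiagonal n, ∑ q ∈ antidiagonal p.2, f p.1 q.1 q.2 := by
  rw [← Finset.sum_sigma (antidiagonal n) (fun p => antidiagonal p.1)
      (fun z => f z.2.1 z.2.2 z.1.2),
    ← Finset.sum_sigma (antidiagonal n) (fun p => antidiagonal p.2)
      (fun z => f z.1.1 z.2.1 z.2.2)]
  refine Finset.sum_nbij' (fun z => ⟨(z.2.1, z.2.2 + z.1.2), (z.2.2, z.1.2)⟩)
    (fun z => ⟨(z.1.1 + z.2.1, z.2.2), (z.1.1, z.2.1)⟩) ?_ ?_ ?_ ?_ ?_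
  · rintro ⟨⟨p1,p2⟩,q1,q2⟩ h
    simp [Finset.mem_sigma, Finset.mem_antidiagonal] at h ⊢
    omega
  · rintro ⟨⟨p1,p2⟩,q1,q2⟩ h
    simp [Finset.mem_sigma, Finset.mem_antidiagonal] at h ⊢
    omega
  · rintro ⟨⟨p1,p2⟩,q1,q2⟩ h
    simp only [Finset.mem_sigma, Finset.HasAntidiagonal.mem_antidiagonal] at h
    obtain ⟨h1, h2⟩ := h
    subst h2
    rfl
  · rintro ⟨⟨p1,p2⟩,q1,q2⟩ h
    simp only [Finset.mem_sigma, Finset.HasAntidiagonal.mem_antidiagonal] at h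
    obtain ⟨h1, h2⟩ := h
    subst h2
    rfl
  · rintro ⟨⟨p1,p2⟩,q1,q2⟩ h
    rfl

/-- Hockey stick. -/
lemma hockey (s' : ℕ) : ∀ t, ∑ p ∈ antidiagonal t, (p.2 + s').choose s' =
    (t + s' + 1).choose (s' + 1) := by
  intro t
  induction t with
  | zero => simp
  | succ t ih =>
    rw [Finset.Nat.sum_antidiagonal_succ]
    simp only
    rw [ih, show t + 1 + s' + 1 = t + s' + 1 + 1 from by omega,
      show t + 1 + s' = t + s' + 1 from by omega]
    exact (Nat.choose_succ_succ _ _).symm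

/-- `blocks r m`: recursive version of `B r m`. -/
def blocks : ℕ → ℕ → Multiset (List Bool)
  | 0, 0 => {[]}
  | 0, _+1 => 0
  | 1, m => {List.replicate m x0}
  | r+2, m => ∑ p ∈ antidiagonal m,
      (blocks (r+1) p.2).map (fun w => List.replicate p.1 x0 ++ [x1] ++ w)

lemma blocks_one (m : ℕ) : blocks 1 m = {List.replicate m x0} := by
  rw [blocks]

lemma blocks_succ_succ (r m : ℕ) : blocks (r+2) m = ∑ p ∈ antidiagonal m,
    (blocks (r+1) p.2).map (fun w => List.replicate p.1 x0 ++ [x1] ++ w) := by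
  rw [blocks]

lemma blocks_zero : ∀ r, blocks (r+1) 0 = {List.replicate r x1} := by
  intro r
  induction r with
  | zero => simp [blocks_one]
  | succ r ih =>
    rw [blocks_succ_succ, Finset.Nat.antidiagonal_zero, Finset.sum_singleton, ih,
      List.replicate_succ]
    simp

/-- Last-block decomposition of `blocks`. -/
lemma blocks_last : ∀ r m, blocks (r+2) m = ∑ p ∈ antidiagonal m,
    (blocks (r+1) p.1).map (fun w => w ++ [x1] ++ List.replicate p.2 x0) := by
  intro r
  induction r with
  | zero =>
    intro m
    rw [blocks_succ_succ]
    refine Finset.sum_congr rfl fun p _ => ?_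
    simp [blocks_one]
  | succ r ih =>
    intro m
    rw [blocks_succ_succ]
    have lhs_eq : ∑ p ∈ antidiagonal m,
        (blocks (r+2) p.2).map (fun w => List.replicate p.1 x0 ++ [x1] ++ w) =
        ∑ p ∈ antidiagonal m, ∑ q ∈ antidiagonal p.2,
          (blocks (r+1) q.1).map
            (fun w => List.replicate p.1 x0 ++ [x1] ++ (w ++ [x1] ++ List.replicate q.2 x0)) := by
      refine Finset.sum_congr rfl fun p _ => ?_
      rw [ih p.2, mmap_sum]
      refine Finset.sum_congr rfl fun q _ => ?_
      rw [Multiset.map_map]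
      rfl
    rw [lhs_eq, ← ad_assoc m (fun a b c => (blocks (r+1) b).map
      (fun w => List.replicate a x0 ++ [x1] ++ (w ++ [x1] ++ List.replicate c x0)))]
    refine Finset.sum_congr rfl fun p _ => ?_
    rw [blocks_succ_succ, mmap_sum]
    refine Finset.sum_congr rfl fun q _ => ?_
    rw [Multiset.map_map]
    refine Multiset.map_congr rfl fun w _ => ?_
    simp

lemma blocks_expand (k s' M : ℕ) :
    ∑ P ∈ antidiagonal M, ((P.2+s'+1).choose (s'+1)) •
        (blocks (k+2) P.1).map (fun w => w ++ [x1] ++ List.replicate (P.2+s'+1) x0) =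
    ∑ P ∈ antidiagonal M, ∑ q ∈ antidiagonal P.1,
      ((P.2+s'+1).choose (s'+1)) •
        (blocks (k+1) q.2).map
          (fun w => List.replicate q.1 x0 ++ [x1] ++ w ++ [x1] ++
            List.replicate (P.2+s'+1) x0) := by
  refine Finset.sum_congr rfl fun P _ => ?_
  rw [blocks_succ_succ, mmap_sum, Finset.smul_sum]
  refine Finset.sum_congr rfl fun q _ => ?_
  rw [Multiset.map_map]
  refine congrArg _ (Multiset.map_congr rfl fun w _ => by simp)

lemma G1 (k s' : ℕ) : ∀ m,
    shuffle (List.replicate m x0) (List.replicate (k+1) x1 ++ List.replicate (s'+1) x0) =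
      ∑ p ∈ antidiagonal m, ((p.2+s'+1).choose (s'+1)) •
        (blocks (k+1) p.1).map (fun w => w ++ [x1] ++ List.replicate (p.2+s'+1) x0) := by
  induction k with
  | zero =>
    intro m
    induction m with
    | zero =>
      rw [List.replicate_zero, shuffle_nil_left, Finset.Nat.antidiagonal_zero,
        Finset.sum_singleton]
      simp [blocks_zero, List.replicate_succ']
    | succ m ihm =>
      rw [List.replicate_succ (a := x0) (n := m),
        show List.replicate (0+1) x1 ++ List.replicate (s'+1) x0
          = x1 :: List.replicate (s'+1) x0 from by simp,
        shuffle_cons_cons,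
        show (x1 :: List.replicate (s'+1) x0 : List Bool)
          = List.replicate (0+1) x1 ++ List.replicate (s'+1) x0 from by simp,
        ← List.replicate_succ, ihm, shuffle_rep_rep, Finset.Nat.sum_antidiagonal_succ]
      simp only [mmap_sum, blocks_one, Multiset.map_singleton, Multiset.map_nsmul]
      conv_rhs => rw [add_comm]
      congr 1
      rw [show m+1+(s'+1) = m+1+s'+1 from by omega, show (0:ℕ)+1 = 1 from rfl, blocks_one]
      simp only [Multiset.map_singleton]
      congr 1
      rw [← Nat.choose_symm (show m+1 ≤ m+1+s'+1 by omega)]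
      congr 1
      omega
  | succ k ihk =>
    intro m
    induction m with
    | zero =>
      rw [List.replicate_zero, shuffle_nil_left, Finset.Nat.antidiagonal_zero,
        Finset.sum_singleton]
      simp [blocks_zero, List.replicate_succ']
    | succ m ihm =>
      rw [List.replicate_succ (a := x0) (n := m),
        show List.replicate (k+1+1) x1 ++ List.replicate (s'+1) x0
          = x1 :: (List.replicate (k+1) x1 ++ List.replicate (s'+1) x0) from by
            simp [List.replicate_succ],
        shuffle_cons_cons,
        show (x1 :: (List.replicate (k+1) x1 ++ List.replicate (s'+1) x0) : List Bool)
          = List.replicate (k+1+1) x1 ++ List.replicate (s'+1) x0 from by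
            simp [List.replicate_succ],
        ← List.replicate_succ, ihm, ihk (m+1)]
      simp only [show k+1+1 = k+2 from rfl]
      have hR : (∑ P ∈ antidiagonal (m+1), ((P.2+s'+1).choose (s'+1)) •
            (blocks (k+2) P.1).map (fun w => w ++ [x1] ++ List.replicate (P.2+s'+1) x0)) =
          (∑ q ∈ antidiagonal (m+1), ((q.2+s'+1).choose (s'+1)) •
            (blocks (k+1) q.1).map
              (fun w => List.replicate 0 x0 ++ [x1] ++ w ++ [x1] ++
                List.replicate (q.2+s'+1) x0)) +
          ∑ P ∈ antidiagonal m, ∑ q ∈ antidiagonal P.1,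
            ((P.2+s'+1).choose (s'+1)) •
              (blocks (k+1) q.2).map
                (fun w => List.replicate (q.1+1) x0 ++ [x1] ++ w ++ [x1] ++
                  List.replicate (P.2+s'+1) x0) := by
        calc (∑ P ∈ antidiagonal (m+1), ((P.2+s'+1).choose (s'+1)) •
            (blocks (k+2) P.1).map (fun w => w ++ [x1] ++ List.replicate (P.2+s'+1) x0))
            = ∑ P ∈ antidiagonal (m+1), ∑ q ∈ antidiagonal P.1,
              ((P.2+s'+1).choose (s'+1)) •
                (blocks (k+1) q.2).map
                  (fun w => List.replicate q.1 x0 ++ [x1] ++ w ++ [x1] ++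
                    List.replicate (P.2+s'+1) x0) := blocks_expand k s' (m+1)
          _ = ∑ P ∈ antidiagonal (m+1), ∑ q ∈ antidiagonal P.2,
              ((q.2+s'+1).choose (s'+1)) •
                (blocks (k+1) q.1).map
                  (fun w => List.replicate P.1 x0 ++ [x1] ++ w ++ [x1] ++
                    List.replicate (q.2+s'+1) x0) :=
            ad_assoc (m+1) (fun a b c => ((c+s'+1).choose (s'+1)) •
              (blocks (k+1) b).map
                (fun w => List.replicate a x0 ++ [x1] ++ w ++ [x1] ++
                  List.replicate (c+s'+1) x0))
          _ = (∑ q ∈ antidiagonal (m+1), ((q.2+s'+1).choose (s'+1)) •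
              (blocks (k+1) q.1).map
                (fun w => List.replicate 0 x0 ++ [x1] ++ w ++ [x1] ++
                  List.replicate (q.2+s'+1) x0)) +
            ∑ P ∈ antidiagonal m, ∑ q ∈ antidiagonal P.2,
              ((q.2+s'+1).choose (s'+1)) •
                (blocks (k+1) q.1).map
                  (fun w => List.replicate (P.1+1) x0 ++ [x1] ++ w ++ [x1] ++
                    List.replicate (q.2+s'+1) x0) := Finset.Nat.sum_antidiagonal_succ
          _ = _ := congrArg _ (ad_assoc m (fun a b c => ((c+s'+1).choose (s'+1)) •
              (blocks (k+1) b).map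
                (fun w => List.replicate (a+1) x0 ++ [x1] ++ w ++ [x1] ++
                  List.replicate (c+s'+1) x0))).symm
      rw [hR]
      conv_lhs => rw [add_comm]
      congr 1
      · -- x1-term
        rw [mmap_sum]
        refine Finset.sum_congr rfl fun q _ => ?_
        rw [Multiset.map_nsmul, Multiset.map_map]
        congr 1
      · -- x0-term
        rw [mmap_sum]
        refine Finset.sum_congr rfl fun p _ => ?_
        rw [blocks_succ_succ, mmap_sum, Finset.smul_sum, mmap_sum]
        refine Finset.sum_congr rfl fun q _ => ?_
        rw [Multiset.map_nsmul, Multiset.map_map, Multiset.map_map]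
        congr 1

lemma pieceA (k s' M : ℕ) :
    Multiset.map (x0 :: ·) (∑ P ∈ antidiagonal M, ((P.2+s'+1).choose (s'+1)) •
        (blocks (k+1) P.1).map (fun w => w ++ [x1] ++ List.replicate (P.2+s'+1) x0)) =
    ∑ q ∈ antidiagonal M, ((q.2+s').choose s') •
        (blocks (k+2) q.1).map
          (fun w => List.replicate 1 x0 ++ w ++ List.replicate (q.2+s'+1) x0) := by
  have step1 : Multiset.map (x0 :: ·) (∑ P ∈ antidiagonal M, ((P.2+s'+1).choose (s'+1)) •
        (blocks (k+1) P.1).map (fun w => w ++ [x1] ++ List.replicate (P.2+s'+1) x0)) =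
      ∑ P ∈ antidiagonal M, ∑ r ∈ antidiagonal P.2,
        ((r.2+s').choose s') •
          (blocks (k+1) P.1).map
            (fun w => List.replicate 1 x0 ++ w ++ [x1] ++
              List.replicate (r.1+(r.2+s'+1)) x0) := by
    rw [mmap_sum]
    refine Finset.sum_congr rfl fun P hP => ?_
    rw [Multiset.map_nsmul, Multiset.map_map, ← hockey s' P.2, Finset.sum_smul]
    refine Finset.sum_congr rfl fun r hr => ?_
    have hr' : r.1 + r.2 = P.2 := Finset.HasAntidiagonal.mem_antidiagonal.mp hr
    congr 1
    refine Multiset.map_congr rfl fun w _ => ?_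
    simp [show r.1+(r.2+s'+1) = P.2+s'+1 from by omega, List.replicate_succ]
  rw [step1, ← ad_assoc M (fun a b c => ((c+s').choose s') •
      (blocks (k+1) a).map
        (fun w => List.replicate 1 x0 ++ w ++ [x1] ++ List.replicate (b+(c+s'+1)) x0))]
  refine Finset.sum_congr rfl fun P _ => ?_
  rw [blocks_last, mmap_sum, Finset.smul_sum]
  refine Finset.sum_congr rfl fun r _ => ?_
  rw [Multiset.map_map]
  congr 1
  refine Multiset.map_congr rfl fun w _ => ?_
  rw [List.replicate_add]
  simp

lemma main0 (k s' : ℕ) : ∀ m,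
    shuffle (List.replicate m x0)
      (List.replicate 1 x0 ++ (List.replicate (k+1) x1 ++ List.replicate (s'+1) x0)) =
    ∑ p ∈ antidiagonal m, ∑ q ∈ antidiagonal p.2,
      ((q.2+s').choose s') •
        (blocks (k+2) q.1).map
          (fun w => List.replicate (p.1+1) x0 ++ w ++ List.replicate (q.2+s'+1) x0) := by
  intro m
  induction m with
  | zero =>
    simp only [List.replicate_zero, shuffle_nil_left, Finset.Nat.antidiagonal_zero,
      Finset.sum_singleton]
    simp [blocks_zero, List.replicate_succ]
  | succ m ihm =>
    rw [List.replicate_succ (a := x0) (n := m),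
      show List.replicate 1 x0 ++ (List.replicate (k+1) x1 ++ List.replicate (s'+1) x0)
        = x0 :: (List.replicate (k+1) x1 ++ List.replicate (s'+1) x0) from by simp,
      shuffle_cons_cons,
      show (x0 :: (List.replicate (k+1) x1 ++ List.replicate (s'+1) x0) : List Bool)
        = List.replicate 1 x0 ++ (List.replicate (k+1) x1 ++ List.replicate (s'+1) x0)
        from by simp,
      ← List.replicate_succ, ihm, G1 k s' (m+1), pieceA k s' (m+1),
      Finset.Nat.sum_antidiagonal_succ
        (f := fun p => ∑ q ∈ antidiagonal p.2, ((q.2+s').choose s') •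
          (blocks (k+2) q.1).map
            (fun w => List.replicate (p.1+1) x0 ++ w ++ List.replicate (q.2+s'+1) x0))]
    rw [add_comm]
    congr 1
    rw [mmap_sum]
    refine Finset.sum_congr rfl fun p _ => ?_
    rw [mmap_sum]
    refine Finset.sum_congr rfl fun q _ => ?_
    rw [Multiset.map_nsmul, Multiset.map_map]
    congr 1

lemma main' (k s' : ℕ) : ∀ n' m,
    shuffle (List.replicate m x0)
      (List.replicate (n'+1) x0 ++ (List.replicate (k+1) x1 ++ List.replicate (s'+1) x0)) =
    ∑ p ∈ antidiagonal m, ∑ q ∈ antidiagonal p.2,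
      ((p.1+n').choose n' * (q.2+s').choose s') •
        (blocks (k+2) q.1).map
          (fun w => List.replicate (p.1+n'+1) x0 ++ w ++ List.replicate (q.2+s'+1) x0) := by
  intro n'
  induction n' with
  | zero =>
    intro m
    simp only [Nat.add_zero, Nat.choose_zero_right, one_mul, show (0:ℕ)+1 = 1 from rfl]
    exact main0 k s' m
  | succ n'' ih =>
    intro m
    induction m with
    | zero =>
      simp only [List.replicate_zero, shuffle_nil_left, Finset.Nat.antidiagonal_zero,
        Finset.sum_singleton]
      simp [blocks_zero, List.replicate_succ]
    | succ m ihm =>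
      rw [List.replicate_succ (a := x0) (n := m),
        show List.replicate (n''+1+1) x0 ++
            (List.replicate (k+1) x1 ++ List.replicate (s'+1) x0)
          = x0 :: (List.replicate (n''+1) x0 ++
            (List.replicate (k+1) x1 ++ List.replicate (s'+1) x0)) from by
            simp [List.replicate_succ],
        shuffle_cons_cons,
        show (x0 :: (List.replicate (n''+1) x0 ++
            (List.replicate (k+1) x1 ++ List.replicate (s'+1) x0)) : List Bool)
          = List.replicate (n''+1+1) x0 ++
            (List.replicate (k+1) x1 ++ List.replicate (s'+1) x0) from by
            simp [List.replicate_succ],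
        ← List.replicate_succ, ihm, ih (m+1)]
      have hsplit : (∑ p ∈ antidiagonal (m+1), ∑ q ∈ antidiagonal p.2,
            ((p.1+(n''+1)).choose (n''+1) * (q.2+s').choose s') •
              (blocks (k+2) q.1).map
                (fun w => List.replicate (p.1+(n''+1)+1) x0 ++ w ++
                  List.replicate (q.2+s'+1) x0)) =
          (∑ p ∈ antidiagonal (m+1), ∑ q ∈ antidiagonal p.2,
            ((p.1+n'').choose n'' * (q.2+s').choose s') •
              (blocks (k+2) q.1).map
                (fun w => List.replicate (p.1+(n''+1)+1) x0 ++ w ++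
                  List.replicate (q.2+s'+1) x0)) +
          (∑ p ∈ antidiagonal (m+1), ∑ q ∈ antidiagonal p.2,
            ((p.1+n'').choose (n''+1) * (q.2+s').choose s') •
              (blocks (k+2) q.1).map
                (fun w => List.replicate (p.1+(n''+1)+1) x0 ++ w ++
                  List.replicate (q.2+s'+1) x0)) := by
        rw [← Finset.sum_add_distrib]
        refine Finset.sum_congr rfl fun p _ => ?_
        rw [← Finset.sum_add_distrib]
        refine Finset.sum_congr rfl fun q _ => ?_
        rw [← add_smul, ← add_mul,
          show (p.1+n'').choose n'' + (p.1+n'').choose (n''+1)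
            = (p.1+(n''+1)).choose (n''+1) from by
            rw [show p.1+(n''+1) = (p.1+n'')+1 from by omega]
            exact (Nat.choose_succ_succ _ _).symm]
      rw [hsplit, add_comm]
      congr 1
      · -- x0-term on S2 (ih at m+1)
        rw [mmap_sum]
        refine Finset.sum_congr rfl fun p _ => ?_
        rw [mmap_sum]
        refine Finset.sum_congr rfl fun q _ => ?_
        rw [Multiset.map_nsmul, Multiset.map_map]
        congr 1
      · -- x0-term on S1 (ihm)
        rw [Finset.Nat.sum_antidiagonal_succ
          (f := fun p => ∑ q ∈ antidiagonal p.2,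
            ((p.1+n'').choose (n''+1) * (q.2+s').choose s') •
              (blocks (k+2) q.1).map
                (fun w => List.replicate (p.1+(n''+1)+1) x0 ++ w ++
                  List.replicate (q.2+s'+1) x0))]
        have hzero : (∑ q ∈ antidiagonal ((0:ℕ), m+1).2,
            ((((0:ℕ), m+1).1+n'').choose (n''+1) * (q.2+s').choose s') •
              (blocks (k+2) q.1).map
                (fun w => List.replicate (((0:ℕ), m+1).1+(n''+1)+1) x0 ++ w ++
                  List.replicate (q.2+s'+1) x0)) = 0 := by
          refine Finset.sum_eq_zero fun q _ => ?_
          rw [show (((0:ℕ), m+1).1+n'') = n'' from by simp,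
            Nat.choose_eq_zero_of_lt (Nat.lt_succ_self n''), zero_mul, zero_smul]
        rw [hzero, zero_add, mmap_sum]
        refine Finset.sum_congr rfl fun p _ => ?_
        rw [mmap_sum]
        refine Finset.sum_congr rfl fun q _ => ?_
        rw [Multiset.map_nsmul, Multiset.map_map,
          show ((p.1+1, p.2).1 : ℕ) = p.1+1 from rfl,
          show p.1+1+n'' = p.1+(n''+1) from by omega,
          show p.1+1+(n''+1)+1 = p.1+(n''+1)+1+1 from by omega,
          List.replicate_succ (a := x0) (n := p.1+(n''+1)+1)]
        congr 1

lemma singleton_sum {α β : Type*} (t : Finset α) (g : α → β) :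
    Multiset.map g t.val = ∑ x ∈ t, ({g x} : Multiset β) := by
  have : (∑ x ∈ t, ({g x} : Multiset β)) = (t.val.map fun x => ({g x} : Multiset β)).sum := rfl
  rw [this, show (t.val.map fun x => ({g x} : Multiset β))
      = ((t.val.map g).map fun a => ({a} : Multiset β)) from by rw [Multiset.map_map]; rfl,
    Multiset.sum_map_singleton]

lemma intercalate_cons₂ (a b : List Bool) (l : List (List Bool)) :
    List.intercalate [x1] (a :: b :: l) = a ++ [x1] ++ List.intercalate [x1] (b :: l) := by
  simp [List.intercalate, List.intersperse]

lemma sum_adT_succ {M : Type*} [AddCommMonoid M] (k n : ℕ) (f : (Fin (k+1) → ℕ) → M) :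
    ∑ x ∈ Finset.Nat.antidiagonalTuple (k+1) n, f x =
    ∑ p ∈ antidiagonal n, ∑ y ∈ Finset.Nat.antidiagonalTuple k p.2, f (Fin.cons p.1 y) := by
  rw [← Finset.sum_sigma (antidiagonal n) (fun p => Finset.Nat.antidiagonalTuple k p.2)
    (fun z => f (Fin.cons z.1.1 z.2))]
  refine Finset.sum_nbij' (fun x => ⟨(x 0, ∑ i, Fin.tail x i), Fin.tail x⟩)
    (fun z => Fin.cons z.1.1 z.2) ?_ ?_ ?_ ?_ ?_
  · intro x hx
    rw [Finset.Nat.mem_antidiagonalTuple] at hx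
    simp only [Finset.mem_sigma, Finset.HasAntidiagonal.mem_antidiagonal, Finset.Nat.mem_antidiagonalTuple,
      and_true]
    rw [← hx, Fin.sum_univ_succ]
    rfl
  · rintro ⟨⟨a, b⟩, y⟩ hz
    simp only [Finset.mem_sigma, Finset.HasAntidiagonal.mem_antidiagonal,
      Finset.Nat.mem_antidiagonalTuple] at hz ⊢
    rw [Fin.sum_cons, hz.2, hz.1]
  · intro x _
    exact Fin.cons_self_tail x
  · rintro ⟨⟨a, b⟩, y⟩ hz
    simp only [Finset.mem_sigma, Finset.HasAntidiagonal.mem_antidiagonal,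
      Finset.Nat.mem_antidiagonalTuple] at hz
    simp only [Fin.cons_zero, Fin.tail_cons]
    obtain ⟨h1, h2⟩ := hz
    subst h2
    rfl
  · intro x _
    rw [Fin.cons_self_tail]

lemma sum_adT_three {M : Type*} [AddCommMonoid M] (m : ℕ) (f : (Fin 3 → ℕ) → M) :
    ∑ x ∈ Finset.Nat.antidiagonalTuple 3 m, f x =
    ∑ p ∈ antidiagonal m, ∑ q ∈ antidiagonal p.2,
      f (Fin.cons p.1 (Fin.cons q.1 ![q.2])) := by
  have h := sum_adT_succ 2 m f
  rw [show Finset.Nat.antidiagonalTuple 3 m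
    = Finset.Nat.antidiagonalTuple (2+1) m from rfl, h]
  refine Finset.sum_congr rfl fun p _ => ?_
  have h2 := sum_adT_succ 1 p.2 (fun y => f (Fin.cons p.1 y))
  rw [show Finset.Nat.antidiagonalTuple 2 p.2
    = Finset.Nat.antidiagonalTuple (1+1) p.2 from rfl, h2]
  refine Finset.sum_congr rfl fun q _ => ?_
  rw [Finset.Nat.antidiagonalTuple_one, Finset.sum_singleton]

lemma B_eq_blocks : ∀ r m, B (r+1) m = blocks (r+1) m := by
  intro r
  induction r with
  | zero =>
    intro m
    rw [B, Finset.Nat.antidiagonalTuple_one, blocks_one]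
    simp [List.intercalate]
  | succ r ih =>
    intro m
    rw [B, singleton_sum]
    have h := sum_adT_succ (r+1) m (fun f => ({List.intercalate [x1]
      (List.ofFn fun i => List.replicate (f i) x0)} : Multiset (List Bool)))
    rw [show Finset.Nat.antidiagonalTuple (r+1+1) m
      = Finset.Nat.antidiagonalTuple ((r+1)+1) m from rfl] at *
    rw [h, blocks_succ_succ]
    refine Finset.sum_congr rfl fun p _ => ?_
    have hword : ∀ y : Fin (r+1) → ℕ,
        List.intercalate [x1]
          (List.ofFn fun i => List.replicate ((Fin.cons p.1 y : Fin (r+1+1) → ℕ) i) x0)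
        = List.replicate p.1 x0 ++ [x1] ++
          List.intercalate [x1] (List.ofFn fun i => List.replicate (y i) x0) := by
      intro y
      rw [List.ofFn_succ]
      simp only [Fin.cons_zero, Fin.cons_succ]
      rw [List.ofFn_succ, intercalate_cons₂]
    calc ∑ y ∈ Finset.Nat.antidiagonalTuple (r+1) p.2,
          ({List.intercalate [x1]
            (List.ofFn fun i => List.replicate ((Fin.cons p.1 y : Fin (r+1+1) → ℕ) i) x0)} :
              Multiset (List Bool))
        = ∑ y ∈ Finset.Nat.antidiagonalTuple (r+1) p.2,
            ({List.replicate p.1 x0 ++ [x1] ++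
              List.intercalate [x1] (List.ofFn fun i => List.replicate (y i) x0)} :
                Multiset (List Bool)) :=
          Finset.sum_congr rfl fun y _ => by rw [hword y]
      _ = ∑ y ∈ Finset.Nat.antidiagonalTuple (r+1) p.2,
            Multiset.map (fun w => List.replicate p.1 x0 ++ [x1] ++ w)
              ({List.intercalate [x1] (List.ofFn fun i => List.replicate (y i) x0)} :
                Multiset (List Bool)) :=
          Finset.sum_congr rfl fun y _ => by rw [Multiset.map_singleton]
      _ = Multiset.map (fun w => List.replicate p.1 x0 ++ [x1] ++ w)
            (∑ y ∈ Finset.Nat.antidiagonalTuple (r+1) p.2,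
              ({List.intercalate [x1] (List.ofFn fun i => List.replicate (y i) x0)} :
                Multiset (List Bool))) := (mmap_sum _ _ _).symm
      _ = Multiset.map (fun w => List.replicate p.1 x0 ++ [x1] ++ w) (B (r+1) p.2) := by
          rw [B, singleton_sum]
      _ = _ := by rw [ih p.2]

theorem shuffle_x0_pow_x0x1x0 (m n k s : ℕ) (hn : 1 ≤ n) (hk : 1 ≤ k) (hs : 1 ≤ s) :
    shuffle (List.replicate m x0)
        (List.replicate n x0 ++ List.replicate k x1 ++ List.replicate s x0) =
      ∑ f ∈ Finset.Nat.antidiagonalTuple 3 m,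
        (Nat.choose (f 0 + n - 1) (n - 1) * Nat.choose (f 2 + s - 1) (s - 1)) •
          (B (k + 1) (f 1)).map
            (fun w => List.replicate (f 0 + n) x0 ++ w ++ List.replicate (f 2 + s) x0) := by
  obtain ⟨n', rfl⟩ : ∃ n', n = n'+1 := ⟨n-1, by omega⟩
  obtain ⟨k', rfl⟩ : ∃ k', k = k'+1 := ⟨k-1, by omega⟩
  obtain ⟨s', rfl⟩ : ∃ s', s = s'+1 := ⟨s-1, by omega⟩
  rw [List.append_assoc, main' k' s' n' m, sum_adT_three m]
  refine Finset.sum_congr rfl fun p _ => ?_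
  refine Finset.sum_congr rfl fun q _ => ?_
  have h0 : (Fin.cons p.1 (Fin.cons q.1 ![q.2]) : Fin 3 → ℕ) 0 = p.1 := rfl
  have h1 : (Fin.cons p.1 (Fin.cons q.1 ![q.2]) : Fin 3 → ℕ) 1 = q.1 := rfl
  have h2 : (Fin.cons p.1 (Fin.cons q.1 ![q.2]) : Fin 3 → ℕ) 2 = q.2 := rfl
  rw [h0, h1, h2,
    show B (k'+1+1) q.1 = blocks (k'+1+1) q.1 from B_eq_blocks (k'+1) q.1,
    show p.1+(n'+1)-1 = p.1+n' from by omega,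
    show n'+1-1 = n' from by omega,
    show q.2+(s'+1)-1 = q.2+s' from by omega,
    show s'+1-1 = s' from by omega,
    show p.1+(n'+1) = p.1+n'+1 from by omega,
    show q.2+(s'+1) = q.2+s'+1 from by omega]
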